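/- Let ε, l, m > 0. Define W(β) := √((m² sin²β + l² cos²β)/(l² sin²β + m² cos²β)) (which equals √((m² tan²β + l²)/(l² tan²β + m²)) wherever tan β is defined), and define M_v(t) := −ε l ∫_0^{2π} sin α · sin(l(cos α − 1)) · tanh( t − 5 + (m l/2) ∫_π^α W(β) dβ ) · W(α) dα. Then M_v is symmetric about t = 5: M_v(5 + s) = M_v(5 − s) for all s ∈ ℝ. -/
import Mathlib


open Real

noncomputable section

/-- The elliptic weight `W(β) = √((m² sin²β + l² cos²β)/(l² sin²β + m² cos²β))`. -/
noncomputable def Wgt (l m β : ℝ) : ℝ :=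
  Real.sqrt ((m ^ 2 * Real.sin β ^ 2 + l ^ 2 * Real.cos β ^ 2) /
    (l ^ 2 * Real.sin β ^ 2 + m ^ 2 * Real.cos β ^ 2))

lemma Wgt_symm (l m α : ℝ) : Wgt l m (2 * π - α) = Wgt l m α := by
  unfold Wgt
  rw [Real.sin_sub, Real.cos_sub, Real.sin_two_pi, Real.cos_two_pi]
  ring_nf

lemma Wgt_int_symm (l m α : ℝ) :
    (∫ β in π..(2 * π - α), Wgt l m β) = -∫ β in π..α, Wgt l m β := by
  have h := intervalIntegral.integral_comp_sub_left
      (a := α) (b := π) (fun β => Wgt l m β) (2 * π)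
  simp only [Wgt_symm] at h
  have h2 : 2 * π - π = π := by ring
  rw [h2] at h
  rw [← h, intervalIntegral.integral_symm]

/-- The leading-order instantaneous flux across the pseudo-streakline of Kirchhoff's
elliptic vortex (semi-axes `l`, `m`) with gate at polar angle `θ = π`, under the
agitation `v(x,y,t) = ε sin(x − l) tanh(t − 5) ĵ`. -/
noncomputable def Mvortex (ε l m t : ℝ) : ℝ :=
  -(ε * l) * ∫ α in (0:ℝ)..(2 * π),
    Real.sin α * Real.sin (l * (Real.cos α - 1)) *
      Real.tanh (t - 5 + (m * l / 2) * ∫ β in π..α, Wgt l m β) * Wgt l m α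

/-- **The elliptic-vortex flux is symmetric about `t = 5`:**
`M_v(5 + s) = M_v(5 − s)` for all `s`. -/
theorem elliptic_vortex_flux_symmetric (ε l m : ℝ) (hε : 0 < ε) (hl : 0 < l) (hm : 0 < m) :
    ∀ s : ℝ, Mvortex ε l m (5 + s) = Mvortex ε l m (5 - s) := by
  intro s
  unfold Mvortex
  simp only [add_sub_cancel_left, sub_sub_cancel_left]
  congr 1
  set G : ℝ → ℝ := fun α =>
    Real.sin α * Real.sin (l * (Real.cos α - 1)) *
      Real.tanh (-s + (m * l / 2) * ∫ β in π..α, Wgt l m β) * Wgt l m α with hG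
  have h := intervalIntegral.integral_comp_sub_left (a := (0:ℝ)) (b := 2 * π) G (2 * π)
  have hb : 2 * π - 2 * π = (0:ℝ) := by ring
  have ha : 2 * π - 0 = 2 * π := by ring
  rw [hb, ha] at h
  rw [← h]
  apply intervalIntegral.integral_congr
  intro α _
  simp only [hG]
  rw [Wgt_symm, Wgt_int_symm, Real.sin_sub, Real.cos_sub]
  simp
  have : -s + -(m * l / 2 * (∫ β in π..α, Wgt l m β))
      = -(s + m * l / 2 * (∫ β in π..α, Wgt l m β)) := by ring
  rw [this, Real.tanh_neg]
  ring
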